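/- Let X be an ordered Banach space with generating cone whose norm is additive on the positive cone (‖x + y‖ = ‖x‖ + ‖y‖ for x, y ∈ X₊), i.e. an AN-space. Then there is a unique positive continuous linear functional 𝟙 ∈ X' with ⟨𝟙, x⟩ = ‖x‖ for all x ∈ X₊, and if X ≠ {0} then ‖𝟙‖ = 1. -/

import Mathlib

theorem norm_functional_exists_unique
    {X : Type*} [NormedAddCommGroup X] [NormedSpace ℝ X]
    (C : Set X) (hclosed : IsClosed C)
    (hadd : ∀ x ∈ C, ∀ y ∈ C, x + y ∈ C)
    (hsmul : ∀ (α : ℝ), 0 ≤ α → ∀ x ∈ C, α • x ∈ C)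
    (hconvex : Convex ℝ C)
    (hproper : C ∩ (-C) = {0})
    (hgen : ∀ x : X, ∃ y ∈ C, ∃ z ∈ C, x = y - z)
    (haddnorm : ∀ x ∈ C, ∀ y ∈ C, ‖x + y‖ = ‖x‖ + ‖y‖) :
    (∃! e : X →L[ℝ] ℝ, (∀ x ∈ C, 0 ≤ e x) ∧ ∀ x ∈ C, e x = ‖x‖) ∧
      ∀ e : X →L[ℝ] ℝ, (∀ x ∈ C, e x = ‖x‖) → (∃ x : X, x ≠ 0) → ‖e‖ = 1 := by
  classical
  -- 0 ∈ C
  obtain ⟨y0, hy0, -⟩ := hgen 0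
  have h0 : (0 : X) ∈ C := by
    have := hsmul 0 le_rfl y0 hy0
    simpa using this
  choose Y hY Z hZ hYZ using hgen
  -- well-definedness key lemma
  have key : ∀ a ∈ C, ∀ b ∈ C, ∀ a' ∈ C, ∀ b' ∈ C, a - b = a' - b' →
      ‖a‖ - ‖b‖ = ‖a'‖ - ‖b'‖ := by
    intro a ha b hb a' ha' b' hb' h
    have h2 : a + b' = a' + b := sub_eq_sub_iff_add_eq_add.mp h
    have h3 : ‖a‖ + ‖b'‖ = ‖a'‖ + ‖b‖ := by
      rw [← haddnorm a ha b' hb', ← haddnorm a' ha' b hb, h2]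
    linarith
  set f : X → ℝ := fun x => ‖Y x‖ - ‖Z x‖ with hf_def
  have hfx : ∀ x, f x = ‖Y x‖ - ‖Z x‖ := fun _ => rfl
  have hf : ∀ x, ∀ a ∈ C, ∀ b ∈ C, x = a - b → f x = ‖a‖ - ‖b‖ := by
    intro x a ha b hb h
    exact key (Y x) (hY x) (Z x) (hZ x) a ha b hb (by rw [← h, ← hYZ x])
  have hfC : ∀ c ∈ C, f c = ‖c‖ := by
    intro c hc
    have := hf c c hc 0 h0 (by simp)
    simpa using this
  have hfadd : ∀ a b : X, f (a + b) = f a + f b := by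
    intro a b
    have h1 : a + b = (Y a + Y b) - (Z a + Z b) := by
      conv_lhs => rw [hYZ a, hYZ b]
      abel
    have h2 := hf (a + b) (Y a + Y b) (hadd _ (hY a) _ (hY b))
      (Z a + Z b) (hadd _ (hZ a) _ (hZ b)) h1
    rw [haddnorm _ (hY a) _ (hY b), haddnorm _ (hZ a) _ (hZ b)] at h2
    rw [h2, hfx a, hfx b]
    ring
  have hfsmul : ∀ (α : ℝ) (x : X), f (α • x) = α * f x := by
    intro α x
    rcases le_or_gt 0 α with hα | hα
    · have h1 : α • x = (α • Y x) - (α • Z x) := by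
        conv_lhs => rw [hYZ x]
        rw [smul_sub]
      have h2 := hf (α • x) (α • Y x) (hsmul α hα _ (hY x))
        (α • Z x) (hsmul α hα _ (hZ x)) h1
      rw [norm_smul, norm_smul, Real.norm_eq_abs, abs_of_nonneg hα] at h2
      rw [h2, hfx x]; ring
    · have hα' : (0:ℝ) ≤ -α := by linarith
      have h1 : α • x = ((-α) • Z x) - ((-α) • Y x) := by
        conv_lhs => rw [hYZ x]
        module
      have h2 := hf (α • x) ((-α) • Z x) (hsmul _ hα' _ (hZ x))
        ((-α) • Y x) (hsmul _ hα' _ (hY x)) h1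
      rw [norm_smul, norm_smul, Real.norm_eq_abs, abs_of_nonneg hα'] at h2
      rw [h2, hfx x]; ring
  have hfbound : ∀ x : X, |f x| ≤ ‖x‖ := by
    intro x
    rw [hfx x]
    calc |‖Y x‖ - ‖Z x‖| ≤ ‖Y x - Z x‖ := abs_norm_sub_norm_le _ _
      _ = ‖x‖ := by rw [← hYZ x]
  set F : X →ₗ[ℝ] ℝ :=
    { toFun := f
      map_add' := hfadd
      map_smul' := hfsmul } with hF_def
  set e₀ : X →L[ℝ] ℝ := F.mkContinuous 1 (fun x => by
    simpa using (show |F x| ≤ ‖x‖ from hfbound x)) with he₀_def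
  have he₀ : ∀ x, e₀ x = f x := fun x => rfl
  constructor
  · refine ⟨e₀, ⟨?_, ?_⟩, ?_⟩
    · intro c hc
      rw [he₀, hfC c hc]
      positivity
    · intro c hc
      rw [he₀, hfC c hc]
    · rintro e ⟨-, heC⟩
      ext x
      have h1 : e x = ‖Y x‖ - ‖Z x‖ := by
        conv_lhs => rw [hYZ x]
        rw [map_sub, heC _ (hY x), heC _ (hZ x)]
      rw [h1, he₀ x, hfx x]
  · rintro e heC ⟨x₀, hx₀⟩
    have hbound : ∀ x : X, |e x| ≤ ‖x‖ := by
      intro x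
      have h1 : e x = ‖Y x‖ - ‖Z x‖ := by
        conv_lhs => rw [hYZ x]
        rw [map_sub, heC _ (hY x), heC _ (hZ x)]
      rw [h1]
      calc |‖Y x‖ - ‖Z x‖| ≤ ‖Y x - Z x‖ := abs_norm_sub_norm_le _ _
        _ = ‖x‖ := by rw [← hYZ x]
    have hle : ‖e‖ ≤ 1 := by
      apply ContinuousLinearMap.opNorm_le_bound _ zero_le_one
      intro x
      simpa using hbound x
    -- find a nonzero element of C
    obtain ⟨c, hc, hcne⟩ : ∃ c ∈ C, c ≠ 0 := by
      by_cases hy : Y x₀ = 0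
      · refine ⟨Z x₀, hZ x₀, ?_⟩
        intro h
        apply hx₀
        rw [hYZ x₀, hy, h, sub_zero]
      · exact ⟨Y x₀, hY x₀, hy⟩
    have hge : 1 ≤ ‖e‖ := by
      have h1 : ‖c‖ ≤ ‖e‖ * ‖c‖ := by
        calc ‖c‖ = e c := (heC c hc).symm
        _ ≤ |e c| := le_abs_self _
        _ ≤ ‖e‖ * ‖c‖ := e.le_opNorm c
      have hcpos : 0 < ‖c‖ := norm_pos_iff.mpr hcne
      exact le_of_mul_le_mul_right (by linarith) hcpos
    linarith
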